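/- Let f : R^n → R, Q ⊆ R^n convex closed, and suppose ψ(·, y_{k+1}) is convex with ψ(y_{k+1}, y_{k+1}) = 0 and f(y_{k+1}) + ψ(x, y_{k+1}) + (μ/2)‖x − y_{k+1}‖² − δ₁(x, y_{k+1}) ≤ f(x) ≤ f(y_{k+1}) + ψ(x, y_{k+1}) + (L/2)‖x − y_{k+1}‖² + δ₂ for all x ∈ Q. Let α_{k+1} be the largest root of A_{k+1}(1 + A_k μ) = L α², A_{k+1} = A_k + α_{k+1}, y_{k+1} = (α_{k+1} u_k + A_k x_k)/A_{k+1}, u_{k+1} = argmin_{x∈Q}[α_{k+1} ψ(x, y_{k+1}) + ((1 + A_k μ)/2)‖x − u_k‖² + (α_{k+1} μ /2)‖x − y_{k+1}‖²], x_{k+1} = (α_{k+1} u_{k+1} + A_k x_k)/A_{k+1}. Then for all x ∈ Q: A_{k+1} f(x_{k+1}) − A_k f(x_k) + ((1 + A_{k+1}μ)/2)‖x − u_{k+1}‖² − ((1 + A_k μ)/2)‖x − u_k‖² ≤ α_{k+1} f(x) + A_k δ₁(x_k, y_{k+1}) + α_{k+1} δ₁(x, y_{k+1}) + A_{k+1}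 δ₂. -/

import Mathlib

lemma fgm_sq_expand {E : Type*} [NormedAddCommGroup E] [InnerProductSpace ℝ E]
    (a b : E) (t : ℝ) :
    ‖a + t • b‖ ^ 2 = ‖a‖ ^ 2 + 2 * t * (inner ℝ a b : ℝ) + t ^ 2 * ‖b‖ ^ 2 := by
  rw [norm_add_sq_real, real_inner_smul_right, norm_smul, Real.norm_eq_abs, mul_pow, sq_abs]
  ring

set_option maxHeartbeats 1000000 in
theorem fgm_one_step (n : ℕ) (f : EuclideanSpace ℝ (Fin n) → ℝ)
    (Q : Set (EuclideanSpace ℝ (Fin n))) (hQconv : Convex ℝ Q) (hQclosed : IsClosed Q)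
    (ψ : EuclideanSpace ℝ (Fin n) → EuclideanSpace ℝ (Fin n) → ℝ)
    (δ₁ : EuclideanSpace ℝ (Fin n) → EuclideanSpace ℝ (Fin n) → ℝ) (δ₂ : ℝ)
    (μ L Ak αk1 : ℝ) (hμ : 0 ≤ μ) (hL : 0 < L) (hAk : 0 ≤ Ak) (hαk1 : 0 < αk1)
    (xk uk uk1 yk1 xk1 : EuclideanSpace ℝ (Fin n))
    (hxkQ : xk ∈ Q) (hukQ : uk ∈ Q) (huk1Q : uk1 ∈ Q) (hyk1Q : yk1 ∈ Q)
    (hψconv : ConvexOn ℝ Q (fun x => ψ x yk1))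
    (hψ0 : ψ yk1 yk1 = 0)
    (hlow : ∀ x ∈ Q,
      f yk1 + ψ x yk1 + (μ / 2) * ‖x - yk1‖ ^ 2 - δ₁ x yk1 ≤ f x)
    (hup : ∀ x ∈ Q,
      f x ≤ f yk1 + ψ x yk1 + (L / 2) * ‖x - yk1‖ ^ 2 + δ₂)
    (hroot : (Ak + αk1) * (1 + Ak * μ) = L * αk1 ^ 2)
    (hy : yk1 = (Ak + αk1)⁻¹ • (αk1 • uk + Ak • xk))
    (hargmin : ∀ z ∈ Q,
      αk1 * ψ uk1 yk1 + ((1 + Ak * μ) / 2) * ‖uk1 - uk‖ ^ 2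
          + (αk1 * μ / 2) * ‖uk1 - yk1‖ ^ 2 ≤
      αk1 * ψ z yk1 + ((1 + Ak * μ) / 2) * ‖z - uk‖ ^ 2
          + (αk1 * μ / 2) * ‖z - yk1‖ ^ 2)
    (hx : xk1 = (Ak + αk1)⁻¹ • (αk1 • uk1 + Ak • xk)) :
    ∀ x ∈ Q,
      (Ak + αk1) * f xk1 - Ak * f xk
          + ((1 + (Ak + αk1) * μ) / 2) * ‖x - uk1‖ ^ 2
          - ((1 + Ak * μ) / 2) * ‖x - uk‖ ^ 2 ≤
        αk1 * f x + Ak * δ₁ xk yk1 + αk1 * δ₁ x yk1 + (Ak + αk1) * δ₂ := by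
  intro x hxQ
  have hA' : 0 < Ak + αk1 := by linarith
  have hA'ne : Ak + αk1 ≠ 0 := hA'.ne'
  -- xk1 as convex combination
  have hxcomb : xk1 = (αk1 / (Ak + αk1)) • uk1 + (Ak / (Ak + αk1)) • xk := by
    rw [hx]; module
  have ha : 0 ≤ αk1 / (Ak + αk1) := by positivity
  have hb : 0 ≤ Ak / (Ak + αk1) := by positivity
  have hab : αk1 / (Ak + αk1) + Ak / (Ak + αk1) = 1 := by
    field_simp
    ring
  have hxk1Q : xk1 ∈ Q := by
    rw [hxcomb]; exact hQconv huk1Q hxkQ ha hb hab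
  -- ψ convexity on the combination
  have hψcomb : ψ xk1 yk1 ≤ (αk1 / (Ak + αk1)) * ψ uk1 yk1
      + (Ak / (Ak + αk1)) * ψ xk yk1 := by
    have h := hψconv.2 huk1Q hxkQ ha hb hab
    simpa [← hxcomb] using h
  have H2' : (Ak + αk1) * ψ xk1 yk1 ≤ αk1 * ψ uk1 yk1 + Ak * ψ xk yk1 := by
    have h := mul_le_mul_of_nonneg_left hψcomb hA'.le
    have e : (Ak + αk1) * ((αk1 / (Ak + αk1)) * ψ uk1 yk1
        + (Ak / (Ak + αk1)) * ψ xk yk1) = αk1 * ψ uk1 yk1 + Ak * ψ xk yk1 := by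
      field_simp
    linarith [e ▸ h]
  -- difference xk1 - yk1
  have hdiff : xk1 - yk1 = ((Ak + αk1)⁻¹ * αk1) • (uk1 - uk) := by
    rw [hx, hy]; module
  have hnorm : ‖xk1 - yk1‖ ^ 2 = ((Ak + αk1)⁻¹ * αk1) ^ 2 * ‖uk1 - uk‖ ^ 2 := by
    rw [hdiff, norm_smul, Real.norm_eq_abs, mul_pow, sq_abs]
  have E3' : (Ak + αk1) * ((L / 2) * ‖xk1 - yk1‖ ^ 2)
      = ((1 + Ak * μ) / 2) * ‖uk1 - uk‖ ^ 2 := by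
    rw [hnorm]
    field_simp
    linear_combination (-(‖uk1 - uk‖ ^ 2)) * hroot
  -- upper bound at xk1, times A'
  have H1' : (Ak + αk1) * f xk1 ≤ (Ak + αk1) * f yk1 + (Ak + αk1) * ψ xk1 yk1
      + (Ak + αk1) * ((L / 2) * ‖xk1 - yk1‖ ^ 2) + (Ak + αk1) * δ₂ := by
    have h := mul_le_mul_of_nonneg_left (hup xk1 hxk1Q) hA'.le
    nlinarith [h]
  -- first order optimality of uk1
  set p := ψ uk1 yk1 with hp
  set q := ψ x yk1 with hq
  set I1 : ℝ := inner ℝ (uk1 - uk) (x - uk1) with hI1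
  set I2 : ℝ := inner ℝ (uk1 - yk1) (x - uk1) with hI2
  set N : ℝ := ‖x - uk1‖ ^ 2 with hN
  have hNnn : 0 ≤ N := by positivity
  have key : ∀ t : ℝ, 0 < t → t ≤ 1 →
      0 ≤ αk1 * (q - p) + (1 + Ak * μ) * I1 + αk1 * μ * I2
        + t * (((1 + Ak * μ) + αk1 * μ) / 2 * N) := by
    intro t ht0 ht1
    have hzeq : (1 - t) • uk1 + t • x = uk1 + t • (x - uk1) := by module
    have hzQ : uk1 + t • (x - uk1) ∈ Q := by
      rw [← hzeq]; exact hQconv huk1Q hxQ (by linarith) ht0.le (by ring)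
    have hψz : ψ (uk1 + t • (x - uk1)) yk1 ≤ (1 - t) * p + t * q := by
      have h := hψconv.2 huk1Q hxQ (by linarith : (0:ℝ) ≤ 1 - t) ht0.le (by ring)
      simpa [hzeq] using h
    have hψz' : αk1 * ψ (uk1 + t • (x - uk1)) yk1 ≤ αk1 * ((1 - t) * p + t * q) :=
      mul_le_mul_of_nonneg_left hψz hαk1.le
    have harg := hargmin (uk1 + t • (x - uk1)) hzQ
    have n1 : ‖uk1 + t • (x - uk1) - uk‖ ^ 2
        = ‖uk1 - uk‖ ^ 2 + 2 * t * I1 + t ^ 2 * N := by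
      have heq : uk1 + t • (x - uk1) - uk = (uk1 - uk) + t • (x - uk1) := by module
      rw [heq, fgm_sq_expand]
    have n2 : ‖uk1 + t • (x - uk1) - yk1‖ ^ 2
        = ‖uk1 - yk1‖ ^ 2 + 2 * t * I2 + t ^ 2 * N := by
      have heq : uk1 + t • (x - uk1) - yk1 = (uk1 - yk1) + t • (x - uk1) := by module
      rw [heq, fgm_sq_expand]
    rw [n1, n2] at harg
    have hsum : 0 ≤ t * (αk1 * (q - p) + (1 + Ak * μ) * I1 + αk1 * μ * I2)
        + t ^ 2 * (((1 + Ak * μ) + αk1 * μ) / 2 * N) := by linarith [harg, hψz']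
    have h2 : t * 0 ≤ t * (αk1 * (q - p) + (1 + Ak * μ) * I1 + αk1 * μ * I2
        + t * (((1 + Ak * μ) + αk1 * μ) / 2 * N)) := by nlinarith [hsum]
    exact le_of_mul_le_mul_left h2 ht0
  have hD : 0 ≤ ((1 + Ak * μ) + αk1 * μ) / 2 * N := by
    have : 0 ≤ (1 + Ak * μ) + αk1 * μ := by nlinarith
    positivity
  set C : ℝ := αk1 * (q - p) + (1 + Ak * μ) * I1 + αk1 * μ * I2 with hCdef
  set D : ℝ := ((1 + Ak * μ) + αk1 * μ) / 2 * N with hDdef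
  have hC : 0 ≤ C := by
    by_contra hneg
    push_neg at hneg
    have ht0 : 0 < min 1 ((-C) / (2 * (D + 1))) :=
      lt_min one_pos (div_pos (by linarith) (by linarith))
    have h := key _ ht0 (min_le_left _ _)
    have h2 : min 1 ((-C) / (2 * (D + 1))) ≤ (-C) / (2 * (D + 1)) := min_le_right _ _
    have h3 : min 1 ((-C) / (2 * (D + 1))) * (2 * (D + 1)) ≤ -C :=
      (le_div_iff₀ (by linarith)).mp h2
    nlinarith [h, h3, ht0, mul_nonneg ht0.le hD]
  -- turn inner products into norms
  have e1 : 2 * I1 = ‖x - uk‖ ^ 2 - ‖uk1 - uk‖ ^ 2 - N := by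
    have h := fgm_sq_expand (uk1 - uk) (x - uk1) 1
    have heq : (uk1 - uk) + (1 : ℝ) • (x - uk1) = x - uk := by module
    rw [heq] at h
    simp only [one_pow, one_mul, mul_one] at h
    rw [hN]; rw [hI1]; linarith
  have e2 : 2 * I2 = ‖x - yk1‖ ^ 2 - ‖uk1 - yk1‖ ^ 2 - N := by
    have h := fgm_sq_expand (uk1 - yk1) (x - uk1) 1
    have heq : (uk1 - yk1) + (1 : ℝ) • (x - uk1) = x - yk1 := by module
    rw [heq] at h
    simp only [one_pow, one_mul, mul_one] at h
    rw [hN]; rw [hI2]; linarith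
  -- lower bounds
  have H5' : αk1 * (f yk1 + q + (μ / 2) * ‖x - yk1‖ ^ 2 - δ₁ x yk1) ≤ αk1 * f x :=
    mul_le_mul_of_nonneg_left (hlow x hxQ) hαk1.le
  have H6' : Ak * (f yk1 + ψ xk yk1 + (μ / 2) * ‖xk - yk1‖ ^ 2 - δ₁ xk yk1)
      ≤ Ak * f xk := mul_le_mul_of_nonneg_left (hlow xk hxkQ) hAk
  have hnn1 : 0 ≤ Ak * (μ * ‖xk - yk1‖ ^ 2) :=
    mul_nonneg hAk (mul_nonneg hμ (by positivity))
  have hnn2 : 0 ≤ αk1 * (μ * ‖uk1 - yk1‖ ^ 2) :=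
    mul_nonneg hαk1.le (mul_nonneg hμ (by positivity))
  have hC' : 0 ≤ αk1 * (q - p)
      + (1 + Ak * μ) * ((‖x - uk‖ ^ 2 - ‖uk1 - uk‖ ^ 2 - N) / 2)
      + αk1 * μ * ((‖x - yk1‖ ^ 2 - ‖uk1 - yk1‖ ^ 2 - N) / 2) := by
    have eI1 : I1 = (‖x - uk‖ ^ 2 - ‖uk1 - uk‖ ^ 2 - N) / 2 := by linarith [e1]
    have eI2 : I2 = (‖x - yk1‖ ^ 2 - ‖uk1 - yk1‖ ^ 2 - N) / 2 := by linarith [e2]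
    rw [hCdef, eI1, eI2] at hC
    exact hC
  linarith [H1', H2', E3', hC', H5', H6', hnn1, hnn2]
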